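/- Let (X, x₀) be a pointed topological space. The following are equivalent: (1) the trivial subgroup {1} is closed in π₁^wh(X, x₀); (2) π₁^wh(X, x₀) is Hausdorff; (3) π₁^wh(X, x₀) is T₃ (Hausdorff and regular); (4) X is homotopically Hausdorff at x₀. -/

import Mathlib

open Set TopologicalSpace

attribute [local instance] Path.Homotopic.setoid

universe u v

variable {X : Type u} [TopologicalSpace X]

/-- The basic whisker-topology set `B([ζ],U)`: all classes of the form `[ζ·η]`
where `η` is a loop based at `x₀` with image in `U`. -/
def whiskerB {x₀ : X} (ζ : Path.Homotopic.Quotient x₀ x₀) (U : Set X) :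
    Set (Path.Homotopic.Quotient x₀ x₀) :=
  {g | ∃ η : Path x₀ x₀, Set.range η ⊆ U ∧ g = ζ.trans ⟦η⟧}

/-- The whisker topology on `π₁(X, x₀)`, generated by the basic sets `B([ζ],U)`
for `U` an open neighborhood of `x₀`. -/
def whiskerTopology (x₀ : X) : TopologicalSpace (Path.Homotopic.Quotient x₀ x₀) :=
  TopologicalSpace.generateFrom
    {S | ∃ (ζ : Path.Homotopic.Quotient x₀ x₀) (U : Set X),
      IsOpen U ∧ x₀ ∈ U ∧ S = whiskerB ζ U}

/-- Inversion `[ζ] ↦ [ζ⁻]` on `π₁(X, x₀)`. -/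
def whiskerInv {x₀ : X} : Path.Homotopic.Quotient x₀ x₀ → Path.Homotopic.Quotient x₀ x₀ :=
  Quotient.map Path.symm (fun _ _ h => Nonempty.map Path.Homotopy.symm₂ h)

/-- `π₁^wh(X, x₀)` is a topological group: the multiplication `([ζ],[η]) ↦ [ζ·η]`
is jointly continuous and inversion `[ζ] ↦ [ζ⁻]` is continuous, with respect to
the whisker topology. -/
def IsWhiskerTopGroup (x₀ : X) : Prop :=
  letI := whiskerTopology x₀
  Continuous (fun p : Path.Homotopic.Quotient x₀ x₀ × Path.Homotopic.Quotient x₀ x₀ =>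
    p.1.trans p.2) ∧
  Continuous (whiskerInv (x₀ := x₀))

section Helpers

variable {x₀ : X}

private lemma wtrans_lift {x₁ x₂ : X} (p : Path x₀ x₁) (q : Path x₁ x₂) :
    (⟦p.trans q⟧ : Path.Homotopic.Quotient x₀ x₂) =
      Path.Homotopic.Quotient.trans ⟦p⟧ ⟦q⟧ := rfl

private lemma wcomp_assoc (a b c : Path.Homotopic.Quotient x₀ x₀) :
    (a.trans b).trans c = a.trans (b.trans c) :=
  Quotient.inductionOn₃ a b c fun p q r => by
    rw [← wtrans_lift, ← wtrans_lift, ← wtrans_lift,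
      ← wtrans_lift]
    exact Quotient.sound ⟨Path.Homotopy.transAssoc p q r⟩

private lemma wcomp_refl (a : Path.Homotopic.Quotient x₀ x₀) :
    a.trans ⟦Path.refl x₀⟧ = a :=
  Quotient.inductionOn a fun p => by
    rw [← wtrans_lift]
    exact Quotient.sound ⟨Path.Homotopy.transRefl p⟩

private lemma wrefl_comp (a : Path.Homotopic.Quotient x₀ x₀) :
    Path.Homotopic.Quotient.trans ⟦Path.refl x₀⟧ a = a :=
  Quotient.inductionOn a fun p => by
    rw [← wtrans_lift]
    exact Quotient.sound ⟨Path.Homotopy.reflTrans p⟩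

private lemma wcomp_symm (δ : Path x₀ x₀) :
    Path.Homotopic.Quotient.trans ⟦δ⟧ ⟦δ.symm⟧ = (⟦Path.refl x₀⟧ : Path.Homotopic.Quotient x₀ x₀) := by
  rw [← wtrans_lift]
  exact Quotient.sound ⟨(Path.Homotopy.reflTransSymm δ).symm⟩

private lemma wsymm_comp (δ : Path x₀ x₀) :
    Path.Homotopic.Quotient.trans ⟦δ.symm⟧ ⟦δ⟧ = (⟦Path.refl x₀⟧ : Path.Homotopic.Quotient x₀ x₀) := by
  rw [← wtrans_lift]
  exact Quotient.sound ⟨(Path.Homotopy.reflSymmTrans δ).symm⟩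

private lemma wcancel (g : Path.Homotopic.Quotient x₀ x₀) (δ : Path x₀ x₀) :
    (g.trans ⟦δ⟧).trans ⟦δ.symm⟧ = g := by
  erw [wcomp_assoc, wcomp_symm, wcomp_refl]

private lemma mem_whiskerB_self {U : Set X} (hU : x₀ ∈ U)
    (ζ : Path.Homotopic.Quotient x₀ x₀) : ζ ∈ whiskerB ζ U := by
  refine ⟨Path.refl x₀, ?_, (wcomp_refl ζ).symm⟩
  rw [Path.refl_range]
  exact Set.singleton_subset_iff.2 hU

private lemma whiskerB_mono {ζ : Path.Homotopic.Quotient x₀ x₀} {U V : Set X}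
    (hUV : U ⊆ V) : whiskerB ζ U ⊆ whiskerB ζ V := by
  rintro k ⟨η, hη, rfl⟩
  exact ⟨η, hη.trans hUV, rfl⟩

private lemma whiskerB_trans {ζ g : Path.Homotopic.Quotient x₀ x₀} {U : Set X}
    (hg : g ∈ whiskerB ζ U) : whiskerB g U ⊆ whiskerB ζ U := by
  rintro k ⟨η', hη', rfl⟩
  obtain ⟨η, hη, rfl⟩ := hg
  refine ⟨η.trans η', ?_, ?_⟩
  · rw [Path.trans_range]; exact Set.union_subset hη hη'
  · erw [wtrans_lift, wcomp_assoc]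

private lemma whisker_isBasis (x₀ : X) :
    @TopologicalSpace.IsTopologicalBasis _ (whiskerTopology x₀)
      {S | ∃ (ζ : Path.Homotopic.Quotient x₀ x₀) (U : Set X),
        IsOpen U ∧ x₀ ∈ U ∧ S = whiskerB ζ U} := by
  letI := whiskerTopology x₀
  refine ⟨?_, ?_, rfl⟩
  · rintro S₁ ⟨ζ₁, U₁, hU₁, hx₁, rfl⟩ S₂ ⟨ζ₂, U₂, hU₂, hx₂, rfl⟩ g ⟨hg₁, hg₂⟩
    refine ⟨whiskerB g (U₁ ∩ U₂), ?_, ?_, ?_⟩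
    · exact ⟨g, U₁ ∩ U₂, hU₁.inter hU₂, ⟨hx₁, hx₂⟩, rfl⟩
    · exact mem_whiskerB_self (U := U₁ ∩ U₂) ⟨hx₁, hx₂⟩ g
    intro k hk
    exact ⟨whiskerB_trans hg₁ (whiskerB_mono Set.inter_subset_left hk),
      whiskerB_trans hg₂ (whiskerB_mono Set.inter_subset_right hk)⟩
  · refine Set.eq_univ_of_forall fun g => ?_
    exact ⟨whiskerB g Set.univ, ⟨g, Set.univ, isOpen_univ, trivial, rfl⟩,
      mem_whiskerB_self (Set.mem_univ x₀) g⟩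

private lemma mem_nhds_whisker {x₀ : X} {g : Path.Homotopic.Quotient x₀ x₀}
    {s : Set (Path.Homotopic.Quotient x₀ x₀)} :
    s ∈ @nhds _ (whiskerTopology x₀) g ↔
      ∃ U : Set X, IsOpen U ∧ x₀ ∈ U ∧ whiskerB g U ⊆ s := by
  letI := whiskerTopology x₀
  rw [(whisker_isBasis x₀).mem_nhds_iff]
  constructor
  · rintro ⟨t, ⟨ζ, U, hU, hx, rfl⟩, hgt, hts⟩
    exact ⟨U, hU, hx, fun k hk => hts (whiskerB_trans hgt hk)⟩
  · rintro ⟨U, hU, hx, hs⟩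
    exact ⟨whiskerB g U, ⟨g, U, hU, hx, rfl⟩, mem_whiskerB_self hx g, hs⟩

private lemma whiskerB_isOpen {x₀ : X} (g : Path.Homotopic.Quotient x₀ x₀) {U : Set X}
    (hU : IsOpen U) (hx : x₀ ∈ U) : @IsOpen _ (whiskerTopology x₀) (whiskerB g U) := by
  letI := whiskerTopology x₀
  exact (whisker_isBasis x₀).isOpen ⟨g, U, hU, hx, rfl⟩

private lemma whiskerB_isClosed {x₀ : X} (g : Path.Homotopic.Quotient x₀ x₀) {U : Set X}
    (hU : IsOpen U) (hx : x₀ ∈ U) : @IsClosed _ (whiskerTopology x₀) (whiskerB g U) := by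
  letI := whiskerTopology x₀
  rw [← isOpen_compl_iff, isOpen_iff_mem_nhds]
  intro k hk
  rw [mem_nhds_whisker]
  refine ⟨U, hU, hx, ?_⟩
  rintro m ⟨δ, hδ, rfl⟩ ⟨η, hη, hm⟩
  refine hk ⟨η.trans δ.symm, ?_, ?_⟩
  · rw [Path.trans_range, Path.symm_range]
    exact Set.union_subset hη hδ
  · calc k = (k.trans ⟦δ⟧).trans ⟦δ.symm⟧ := (wcancel k δ).symm
      _ = (g.trans ⟦η⟧).trans ⟦δ.symm⟧ := by rw [← hm]
      _ = g.trans ⟦η.trans δ.symm⟧ := by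
        erw [wcomp_assoc, wtrans_lift]

private lemma whisker_regular (x₀ : X) : @RegularSpace _ (whiskerTopology x₀) := by
  letI := whiskerTopology x₀
  refine RegularSpace.of_exists_mem_nhds_isClosed_subset fun g s hs => ?_
  obtain ⟨U, hU, hx, hsub⟩ := mem_nhds_whisker.1 hs
  exact ⟨whiskerB g U, mem_nhds_whisker.2 ⟨U, hU, hx, le_refl _⟩,
    whiskerB_isClosed g hU hx, hsub⟩

end Helpers

/-- The following are equivalent: (1) the trivial subgroup `{1}` is closed in
`π₁^wh(X, x₀)`; (2) `π₁^wh(X, x₀)` is Hausdorff; (3) `π₁^wh(X, x₀)` is `T₃`; (4) `X` is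
homotopically Hausdorff at `x₀`. -/
theorem whisker_hausdorff_tfae (x₀ : X) :
    [ @IsClosed _ (whiskerTopology x₀)
        {(⟦Path.refl x₀⟧ : Path.Homotopic.Quotient x₀ x₀)},
      @T2Space _ (whiskerTopology x₀),
      @T3Space _ (whiskerTopology x₀),
      ∀ ζ : Path x₀ x₀, (⟦ζ⟧ : Path.Homotopic.Quotient x₀ x₀) ≠ ⟦Path.refl x₀⟧ →
        ∃ U : Set X, IsOpen U ∧ x₀ ∈ U ∧
          ∀ η : Path x₀ x₀, Set.range ⇑η ⊆ U → ¬ ζ.Homotopic η ].TFAE := by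
  letI := whiskerTopology x₀
  tfae_have 1 → 4 := by
    intro h ζ hζ
    have h1 : ({(⟦Path.refl x₀⟧ : Path.Homotopic.Quotient x₀ x₀)}ᶜ :
        Set (Path.Homotopic.Quotient x₀ x₀)) ∈ @nhds _ (whiskerTopology x₀) ⟦ζ⟧ :=
      h.isOpen_compl.mem_nhds (Set.mem_compl_singleton_iff.2 hζ)
    obtain ⟨U, hU, hx, hsub⟩ := mem_nhds_whisker.1 h1
    refine ⟨U, hU, hx, fun η hη hom => ?_⟩
    have : (⟦ζ⟧ : Path.Homotopic.Quotient x₀ x₀) = ⟦η⟧ := Quotient.sound hom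
    have hmem : (⟦Path.refl x₀⟧ : Path.Homotopic.Quotient x₀ x₀) ∈ whiskerB ⟦ζ⟧ U := by
      refine ⟨η.symm, by rwa [Path.symm_range], ?_⟩
      rw [this, wcomp_symm]
    exact hsub hmem rfl
  tfae_have 4 → 2 := by
    intro h4
    refine ⟨fun g k hgk => ?_⟩
    induction g using Quotient.inductionOn with | h a =>
    induction k using Quotient.inductionOn with | h b =>
    -- the "difference" loop
    have hd : (⟦b.symm.trans a⟧ : Path.Homotopic.Quotient x₀ x₀) ≠ ⟦Path.refl x₀⟧ := by
      intro hcon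
      apply hgk
      have : Path.Homotopic.Quotient.trans ⟦b⟧ ⟦b.symm.trans a⟧ =
          Path.Homotopic.Quotient.trans ⟦b⟧ (⟦Path.refl x₀⟧ : Path.Homotopic.Quotient x₀ x₀) := by
        rw [hcon]
      erw [wcomp_refl] at this
      erw [← this, wtrans_lift, ← wcomp_assoc, wcomp_symm, wrefl_comp]
    obtain ⟨U, hU, hx, hsep⟩ := h4 (b.symm.trans a) hd
    refine ⟨whiskerB ⟦a⟧ U, whiskerB ⟦b⟧ U, whiskerB_isOpen _ hU hx, whiskerB_isOpen _ hU hx,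
      mem_whiskerB_self hx _, mem_whiskerB_self hx _, ?_⟩
    rw [Set.disjoint_left]
    rintro m ⟨η, hη, rfl⟩ ⟨η', hη', hm⟩
    refine hsep (η'.trans η.symm) ?_ ?_
    · rw [Path.trans_range, Path.symm_range]
      exact Set.union_subset hη' hη
    · exact Quotient.exact (show (⟦b.symm.trans a⟧ : Path.Homotopic.Quotient x₀ x₀) =
        ⟦η'.trans η.symm⟧ from calc Path.Homotopic.Quotient.mk (b.symm.trans a)
          = Path.Homotopic.Quotient.trans ⟦b.symm⟧ ⟦a⟧ := wtrans_lift _ _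
        _ = Path.Homotopic.Quotient.trans ⟦b.symm⟧
            ((Path.Homotopic.Quotient.trans ⟦a⟧ ⟦η⟧).trans ⟦η.symm⟧) := by erw [wcancel]
        _ = Path.Homotopic.Quotient.trans ⟦b.symm⟧
            ((Path.Homotopic.Quotient.trans ⟦b⟧ ⟦η'⟧).trans ⟦η.symm⟧) := by rw [← hm]
        _ = (Path.Homotopic.Quotient.trans ⟦b.symm⟧ ⟦b⟧).trans
            (Path.Homotopic.Quotient.trans ⟦η'⟧ ⟦η.symm⟧) := by
              erw [wcomp_assoc, wcomp_assoc]
        _ = Path.Homotopic.Quotient.mk (η'.trans η.symm) := by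
              erw [wsymm_comp, wrefl_comp, ← wtrans_lift]; rfl)
  tfae_have 2 → 3 := by
    intro h2
    haveI := h2
    haveI := whisker_regular x₀
    exact { toT0Space := inferInstance, toRegularSpace := inferInstance }
  tfae_have 3 → 2 := by
    intro h3
    haveI := h3
    exact inferInstance
  tfae_have 2 → 1 := by
    intro h2
    haveI := h2
    exact isClosed_singleton
  tfae_finish
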